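/- Let f be a convex function on an interval I, let Φ : M_m(ℂ) → M_n(ℂ) be a positive unital linear map, and let A be an m×m Hermitian matrix with spectrum in I. Then the eigenvalues of f(Φ(A)) are weakly majorized by the eigenvalues of Φ(f(A)): for each 1 ≤ k ≤ n, the sum of the k largest eigenvalues of f(Φ(A)) is at most the sum of the k largest eigenvalues of Φ(f(A)). -/

import Mathlib

open Matrix
open scoped ComplexOrder Kronecker

/-- Functional calculus for Hermitian matrices: apply `f : ℝ → ℝ` to the eigenvalues in a
spectral decomposition (junk value `0` if the matrix is not Hermitian). -/
noncomputable def hermCFC {ι : Type*} [Fintype ι] [DecidableEq ι]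
    (M : Matrix ι ι ℂ) (f : ℝ → ℝ) : Matrix ι ι ℂ :=
  if h : M.IsHermitian then h.cfc f else 0

/-- Eigenvalues of a Hermitian matrix listed in decreasing order:
`eigDesc M j` is the `(j+1)`-th largest eigenvalue (junk value `0` if not Hermitian). -/
noncomputable def eigDesc {n : ℕ} (M : Matrix (Fin n) (Fin n) ℂ) : Fin n → ℝ :=
  if h : M.IsHermitian then fun j => h.eigenvalues (Tuple.sort h.eigenvalues j.rev) else 0

/-- Eigenvalues of a Hermitian matrix listed in increasing order:
`eigAsc M j` is the `(j+1)`-th smallest eigenvalue (junk value `0` if not Hermitian). -/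
noncomputable def eigAsc {n : ℕ} (M : Matrix (Fin n) (Fin n) ℂ) : Fin n → ℝ :=
  if h : M.IsHermitian then fun j => h.eigenvalues (Tuple.sort h.eigenvalues j) else 0

/-- The absolute value `|X| = (XᴴX)^(1/2)` of a matrix. -/
noncomputable def matAbs {n : ℕ} (X : Matrix (Fin n) (Fin n) ℂ) : Matrix (Fin n) (Fin n) ℂ :=
  (Matrix.posSemidef_conjTranspose_mul_self X).isHermitian.eigenvectorUnitary.1 *
    diagonal (((↑) : ℝ → ℂ) ∘ (√·) ∘ (Matrix.posSemidef_conjTranspose_mul_self X).isHermitian.eigenvalues) *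
    (star (Matrix.posSemidef_conjTranspose_mul_self X).isHermitian.eigenvectorUnitary : Matrix (Fin n) (Fin n) ℂ)

/-- The Loewner order: `X ≤ Y` iff `Y - X` is positive semidefinite. -/
def loewnerLE {n : ℕ} (X Y : Matrix (Fin n) (Fin n) ℂ) : Prop := (Y - X).PosSemidef

/-! ### Auxiliary lemmas -/

lemma qf_formula {n : ℕ} (U : Matrix (Fin n) (Fin n) ℂ) (d : Fin n → ℝ) (v : Fin n → ℂ) :
    (star v ⬝ᵥ (U * Matrix.diagonal ((↑) ∘ d) * star U) *ᵥ v).re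
      = ∑ q, d q * Complex.normSq ((star U *ᵥ v) q) := by
  have hsw : star v ᵥ* U = star (star U *ᵥ v) := by
    rw [star_mulVec, star_eq_conjTranspose, conjTranspose_conjTranspose]
  rw [← mulVec_mulVec, ← mulVec_mulVec, dotProduct_mulVec, hsw]
  have : star (star U *ᵥ v) ⬝ᵥ (Matrix.diagonal ((↑) ∘ d)) *ᵥ (star U *ᵥ v)
      = ∑ q, ((d q * Complex.normSq ((star U *ᵥ v) q) : ℝ) : ℂ) := by
    simp only [dotProduct, mulVec_diagonal]
    congr 1; funext q
    simp only [Pi.star_apply, Function.comp_apply, Complex.ofReal_mul, Complex.star_def]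
    rw [show (starRingEnd ℂ) ((star U *ᵥ v) q) * ((d q : ℂ) * (star U *ᵥ v) q)
        = (d q : ℂ) * ((starRingEnd ℂ) ((star U *ᵥ v) q) * (star U *ᵥ v) q) by ring,
      ← Complex.normSq_eq_conj_mul_self]
  rw [this, ← Complex.ofReal_sum]
  simp

lemma mulVec_col {n m : ℕ} (Mx : Matrix (Fin n) (Fin m) ℂ) (V : Matrix (Fin m) (Fin m) ℂ) (i : Fin m) :
    (Mx *ᵥ fun p => V p i) = fun q => (Mx * V) q i := by
  funext q; simp [mulVec, Matrix.mul_apply, dotProduct]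

lemma row_normSq {n : ℕ} (T : Matrix (Fin n) (Fin n) ℂ) (hT : T * star T = 1) (q : Fin n) :
    ∑ i, Complex.normSq (T q i) = 1 := by
  have h := congrArg (fun M => (M q q).re) hT
  simp only [Matrix.mul_apply, Matrix.one_apply_eq, Complex.one_re] at h
  rw [← h]
  simp only [star_eq_conjTranspose, conjTranspose_apply, Complex.re_sum]
  congr 1; funext i
  rw [show T q i * star (T q i) = star (T q i) * T q i by ring, Complex.star_def,
    ← Complex.normSq_eq_conj_mul_self]
  simp

lemma col_normSq {n : ℕ} (T : Matrix (Fin n) (Fin n) ℂ) (hT : star T * T = 1) (i : Fin n) :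
    ∑ q, Complex.normSq (T q i) = 1 := by
  have h := congrArg (fun M => (M i i).re) hT
  simp only [Matrix.mul_apply, Matrix.one_apply_eq, Complex.one_re] at h
  rw [← h]
  simp only [star_eq_conjTranspose, conjTranspose_apply, Complex.re_sum]
  congr 1; funext q
  rw [Complex.star_def, ← Complex.normSq_eq_conj_mul_self]
  simp

lemma core_lemma {n : ℕ} (e c : Fin n → ℝ) (k : Fin n) (he : Monotone e)
    (hc0 : ∀ q, 0 ≤ c q) (hc1 : ∀ q, c q ≤ 1) (hsum : ∑ q, c q = (k : ℕ) + 1) :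
    ∑ q, e q * c q ≤ ∑ q ∈ Finset.Ici k.rev, e q := by
  set t := e k.rev with ht
  have hcard : ((Finset.Ici k.rev).card : ℝ) = (k : ℕ) + 1 := by
    rw [Fin.card_Ici]
    have h1 := k.isLt
    have h2 : (k.rev : ℕ) = n - 1 - k := Fin.val_rev k ▸ by omega
    rw [h2]
    have : n - (n - 1 - (k:ℕ)) = (k:ℕ) + 1 := by omega
    rw [this]; push_cast; ring
  have key : ∑ q, (e q - t) * c q ≤ ∑ q ∈ Finset.Ici k.rev, (e q - t) := by
    rw [← Finset.sum_add_sum_compl (Finset.Ici k.rev) (fun q => (e q - t) * c q)]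
    have h1 : ∑ q ∈ Finset.Ici k.rev, (e q - t) * c q ≤ ∑ q ∈ Finset.Ici k.rev, (e q - t) := by
      apply Finset.sum_le_sum
      intro q hq
      have : t ≤ e q := he (Finset.mem_Ici.mp hq)
      nlinarith [hc0 q, hc1 q]
    have h2 : ∑ q ∈ (Finset.Ici k.rev)ᶜ, (e q - t) * c q ≤ 0 := by
      apply Finset.sum_nonpos
      intro q hq
      have hq' : ¬ k.rev ≤ q := by simpa [Finset.mem_compl] using hq
      have : e q ≤ t := he (le_of_lt (lt_of_not_ge hq'))
      exact mul_nonpos_of_nonpos_of_nonneg (by linarith) (hc0 q)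
    linarith
  have expand : ∑ q, e q * c q = ∑ q, (e q - t) * c q + t * ((k:ℕ) + 1) := by
    rw [← hsum, Finset.mul_sum, ← Finset.sum_add_distrib]
    congr 1; funext q; ring
  have expand2 : ∑ q ∈ Finset.Ici k.rev, (e q - t) = ∑ q ∈ Finset.Ici k.rev, e q - t * ((k:ℕ)+1) := by
    rw [Finset.sum_sub_distrib, Finset.sum_const, ← hcard]
    ring
  linarith

lemma rev_sum {n : ℕ} (e : Fin n → ℝ) (k : Fin n) :
    ∑ j ∈ Finset.Iic k, e j.rev = ∑ j ∈ Finset.Ici k.rev, e j := by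
  apply Finset.sum_nbij' (fun j => j.rev) (fun j => j.rev)
  · intro a ha; simpa [Finset.mem_Ici, Fin.rev_le_rev] using Finset.mem_Iic.mp ha
  · intro a ha; simp only [Finset.mem_Iic]
    have := Finset.mem_Ici.mp ha
    rwa [← Fin.rev_le_rev, Fin.rev_rev] at this
  · intro a _; exact Fin.rev_rev a
  · intro a _; exact Fin.rev_rev a
  · intro a _; rfl

lemma scalar_kf {n : ℕ} (d c : Fin n → ℝ) (k : Fin n)
    (hc0 : ∀ q, 0 ≤ c q) (hc1 : ∀ q, c q ≤ 1) (hsum : ∑ q, c q = (k : ℕ) + 1) :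
    ∑ q, d q * c q ≤ ∑ j ∈ Finset.Iic k, d (Tuple.sort d j.rev) := by
  have h1 : ∑ q, d q * c q = ∑ q, (d ∘ Tuple.sort d) q * (c ∘ Tuple.sort d) q :=
    (Fintype.sum_equiv (Tuple.sort d) _ _ (fun q => rfl)).symm
  have h2 : ∑ j ∈ Finset.Iic k, d (Tuple.sort d j.rev)
      = ∑ j ∈ Finset.Ici k.rev, (d ∘ Tuple.sort d) j := rev_sum (d ∘ Tuple.sort d) k
  rw [h1, h2]
  exact core_lemma _ _ k (Tuple.monotone_sort d) (fun q => hc0 _) (fun q => hc1 _)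
    (by rw [← hsum]; exact Fintype.sum_equiv (Tuple.sort d) _ _ (fun q => rfl))

lemma kf_cols {n : ℕ} (d : Fin n → ℝ) (W V : Matrix (Fin n) (Fin n) ℂ)
    (hW : W ∈ Matrix.unitaryGroup (Fin n) ℂ) (hV : V ∈ Matrix.unitaryGroup (Fin n) ℂ)
    (S : Finset (Fin n)) (k : Fin n) (hS : S.card = (k : ℕ) + 1) :
    ∑ i ∈ S, (star (fun p => V p i) ⬝ᵥ (W * Matrix.diagonal ((↑) ∘ d) * star W) *ᵥ (fun p => V p i)).re
      ≤ ∑ j ∈ Finset.Iic k, d (Tuple.sort d j.rev) := by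
  set T := star W * V with hTdef
  have hWW : star W * W = 1 := Matrix.mem_unitaryGroup_iff'.mp hW
  have hVV : V * star V = 1 := Matrix.mem_unitaryGroup_iff.mp hV
  have hT1 : T * star T = 1 := by
    rw [hTdef, StarMul.star_mul, star_star]
    calc star W * V * (star V * W) = star W * (V * star V) * W := by noncomm_ring
      _ = 1 := by rw [hVV, mul_one, hWW]
  have hT2 : star T * T = 1 := by
    rw [hTdef, StarMul.star_mul, star_star]
    have hVV' : star V * V = 1 := Matrix.mem_unitaryGroup_iff'.mp hV
    have hWW' : W * star W = 1 := Matrix.mem_unitaryGroup_iff.mp hW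
    calc star V * W * (star W * V) = star V * (W * star W) * V := by noncomm_ring
      _ = 1 := by rw [hWW', mul_one, hVV']
  have hqf : ∀ i, (star (fun p => V p i) ⬝ᵥ (W * Matrix.diagonal ((↑) ∘ d) * star W) *ᵥ (fun p => V p i)).re
      = ∑ q, d q * Complex.normSq (T q i) := by
    intro i
    rw [qf_formula, mulVec_col]
  simp_rw [hqf]
  rw [Finset.sum_comm]
  have : ∀ q, ∑ i ∈ S, d q * Complex.normSq (T q i) = d q * ∑ i ∈ S, Complex.normSq (T q i) := by
    intro q; rw [Finset.mul_sum]
  simp_rw [this]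
  apply scalar_kf
  · intro q; exact Finset.sum_nonneg fun i _ => Complex.normSq_nonneg _
  · intro q
    calc ∑ i ∈ S, Complex.normSq (T q i) ≤ ∑ i, Complex.normSq (T q i) :=
          Finset.sum_le_sum_of_subset_of_nonneg (Finset.subset_univ S)
            (fun i _ _ => Complex.normSq_nonneg _)
      _ = 1 := row_normSq T hT1 q
  · rw [Finset.sum_comm]
    have : ∀ i, ∑ q, Complex.normSq (T q i) = 1 := fun i => col_normSq T hT2 i
    simp_rw [this]
    rw [Finset.sum_const, hS]; simp

lemma qf_col_self {n : ℕ} (W : Matrix (Fin n) (Fin n) ℂ) (d : Fin n → ℝ)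
    (hW : star W * W = 1) (i : Fin n) :
    (star (fun p => W p i) ⬝ᵥ (W * Matrix.diagonal ((↑) ∘ d) * star W) *ᵥ (fun p => W p i)).re
      = d i := by
  rw [qf_formula, mulVec_col, hW]
  have : ∀ q, Complex.normSq ((1 : Matrix (Fin n) (Fin n) ℂ) q i) = if q = i then 1 else 0 := by
    intro q
    by_cases h : q = i <;> simp [Matrix.one_apply, h]
  simp_rw [this]
  simp

lemma decomp_diag {m : ℕ} (g : Fin m → ℝ) :
    Matrix.diagonal ((↑) ∘ g : Fin m → ℂ)
      = ∑ q, (g q : ℂ) • Matrix.diagonal (fun p => if p = q then (1:ℂ) else 0) := by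
  ext i j
  rw [Matrix.sum_apply]
  by_cases h : i = j
  · subst h
    simp [Matrix.diagonal_apply, Finset.sum_ite_eq']
  · simp [Matrix.diagonal_apply_ne _ h, h]

lemma decomp {m : ℕ} (U : Matrix (Fin m) (Fin m) ℂ) (g : Fin m → ℝ) :
    U * Matrix.diagonal ((↑) ∘ g) * star U
      = ∑ q, (g q : ℂ) • (U * Matrix.diagonal (fun p => if p = q then (1:ℂ) else 0) * star U) := by
  rw [decomp_diag, Finset.mul_sum, Finset.sum_mul]
  congr 1; funext q
  rw [Matrix.mul_smul, Matrix.smul_mul]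

lemma sum_mulVec' {n m : ℕ} (Mf : Fin m → Matrix (Fin n) (Fin n) ℂ) (v : Fin n → ℂ) :
    (∑ q, Mf q) *ᵥ v = ∑ q, (Mf q *ᵥ v) := by
  funext i
  simp only [mulVec, dotProduct, Matrix.sum_apply, Finset.sum_apply, Finset.sum_mul]
  rw [Finset.sum_comm]

lemma dot_sum' {n m : ℕ} (x : Fin m → (Fin n → ℂ)) (v : Fin n → ℂ) :
    v ⬝ᵥ (∑ q, x q) = ∑ q, v ⬝ᵥ x q := by
  simp only [dotProduct, Finset.sum_apply, Finset.mul_sum]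
  rw [Finset.sum_comm]

lemma qf_sum {n m : ℕ} (g : Fin m → ℝ) (Mf : Fin m → Matrix (Fin n) (Fin n) ℂ) (v : Fin n → ℂ) :
    (star v ⬝ᵥ (∑ q, (g q : ℂ) • Mf q) *ᵥ v).re = ∑ q, g q * (star v ⬝ᵥ (Mf q) *ᵥ v).re := by
  rw [sum_mulVec', dot_sum', Complex.re_sum]
  congr 1; funext q
  rw [smul_mulVec, dotProduct_smul, smul_eq_mul, Complex.re_ofReal_mul]

lemma phi_decomp {m n : ℕ} (Φ : Matrix (Fin m) (Fin m) ℂ →ₗ[ℂ] Matrix (Fin n) (Fin n) ℂ)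
    (U : Matrix (Fin m) (Fin m) ℂ) (g : Fin m → ℝ) :
    Φ (U * Matrix.diagonal ((↑) ∘ g) * star U)
      = ∑ q, (g q : ℂ) • Φ (U * Matrix.diagonal (fun p => if p = q then (1:ℂ) else 0) * star U) := by
  rw [decomp, map_sum]
  simp_rw [_root_.map_smul]

lemma pmat_psd {m : ℕ} (U : Matrix (Fin m) (Fin m) ℂ) (q : Fin m) :
    (U * Matrix.diagonal (fun p => if p = q then (1:ℂ) else 0) * star U).PosSemidef := by
  have hD : (Matrix.diagonal (fun p => if p = q then (1:ℂ) else 0)).PosSemidef := by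
    rw [Matrix.posSemidef_diagonal_iff]
    intro i; split <;> simp
  simpa [star_eq_conjTranspose] using hD.mul_mul_conjTranspose_same U

lemma phi_herm {m n : ℕ} (Φ : Matrix (Fin m) (Fin m) ℂ →ₗ[ℂ] Matrix (Fin n) (Fin n) ℂ)
    (hpos : ∀ X : Matrix (Fin m) (Fin m) ℂ, X.PosSemidef → (Φ X).PosSemidef)
    (U : Matrix (Fin m) (Fin m) ℂ) (g : Fin m → ℝ) :
    (Φ (U * Matrix.diagonal ((↑) ∘ g) * star U)).IsHermitian := by
  rw [phi_decomp]
  show Matrix.IsHermitian _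
  unfold Matrix.IsHermitian
  rw [conjTranspose_sum]
  congr 1; funext q
  rw [conjTranspose_smul, (hpos _ (pmat_psd U q)).1]
  norm_num

lemma herm_conj_diag {n : ℕ} (U : Matrix (Fin n) (Fin n) ℂ) (g : Fin n → ℝ) :
    (U * Matrix.diagonal (Complex.ofReal ∘ g) * star U).IsHermitian := by
  have hD : (Matrix.diagonal (Complex.ofReal ∘ g)).IsHermitian := by
    rw [Matrix.isHermitian_diagonal_iff]
    intro i
    show _root_.IsSelfAdjoint _
    rw [_root_.IsSelfAdjoint, Complex.star_def, Function.comp_apply, Complex.conj_ofReal]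
  simpa [star_eq_conjTranspose] using Matrix.isHermitian_mul_mul_conjTranspose U hD

lemma pmat_sum {m : ℕ} (U : Matrix (Fin m) (Fin m) ℂ) (hU : U * star U = 1) :
    ∑ q, U * Matrix.diagonal (fun p => if p = q then (1:ℂ) else 0) * star U = 1 := by
  have h1 : ∑ q : Fin m, Matrix.diagonal (fun p => if p = q then (1:ℂ) else 0) = 1 := by
    ext i j
    rw [Matrix.sum_apply]
    by_cases h : i = j
    · subst h
      simp [Matrix.diagonal_apply, Finset.sum_ite_eq']
    · simp [Matrix.diagonal_apply_ne _ h, Matrix.one_apply_ne h]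
  calc ∑ q, U * Matrix.diagonal (fun p => if p = q then (1:ℂ) else 0) * star U
      = U * (∑ q : Fin m, Matrix.diagonal (fun p => if p = q then (1:ℂ) else 0)) * star U := by
        rw [Finset.mul_sum, Finset.sum_mul]
    _ = 1 := by rw [h1, mul_one, hU]

lemma dot_self_re {n : ℕ} (V : Matrix (Fin n) (Fin n) ℂ) (hV : star V * V = 1) (i : Fin n) :
    (star (fun p => V p i) ⬝ᵥ (fun p => V p i)).re = 1 := by
  rw [← col_normSq V hV i]
  simp only [dotProduct, Pi.star_apply, Complex.re_sum]
  congr 1; funext q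
  rw [Complex.star_def, ← Complex.normSq_eq_conj_mul_self]
  simp

/-- For a convex `f` on an interval `I`, a positive unital linear map `Φ`, and a Hermitian `A`
with spectrum in `I`, the eigenvalues of `f(Φ(A))` are weakly majorized by those of `Φ(f(A))`:
the sum of the `k` largest eigenvalues of `f(Φ(A))` is at most that of `Φ(f(A))`. -/
theorem stmt7 {m n : ℕ} (I : Set ℝ) (hI : Convex ℝ I) (f : ℝ → ℝ)
    (hconv : ConvexOn ℝ I f)
    (Φ : Matrix (Fin m) (Fin m) ℂ →ₗ[ℂ] Matrix (Fin n) (Fin n) ℂ)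
    (hpos : ∀ X : Matrix (Fin m) (Fin m) ℂ, X.PosSemidef → (Φ X).PosSemidef)
    (hunital : Φ 1 = 1)
    (A : Matrix (Fin m) (Fin m) ℂ) (hA : A.IsHermitian) (hspec : ∀ i, hA.eigenvalues i ∈ I) :
    ∀ k : Fin n, ∑ j ∈ Finset.Iic k, eigDesc (hermCFC (Φ A) f) j ≤
      ∑ j ∈ Finset.Iic k, eigDesc (Φ (hermCFC A f)) j := by
  intro k
  classical
  -- A-side spectral data
  set α : Fin m → ℝ := hA.eigenvalues with hαdef
  set UA : Matrix (Fin m) (Fin m) ℂ := (Matrix.IsHermitian.eigenvectorUnitary hA :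
      Matrix (Fin m) (Fin m) ℂ) with hUAdef
  have hUAmem := (Matrix.IsHermitian.eigenvectorUnitary hA).2
  have hUA1 : UA * star UA = 1 := Matrix.mem_unitaryGroup_iff.mp hUAmem
  have hA_spec : A = UA * Matrix.diagonal ((↑) ∘ α) * star UA := hA.spectral_theorem
  have hfA_eq : hermCFC A f = UA * Matrix.diagonal ((↑) ∘ (f ∘ α)) * star UA := by
    rw [hermCFC, dif_pos hA]; rfl
  -- B = Φ A
  have hB : (Φ A).IsHermitian := by rw [hA_spec]; exact phi_herm Φ hpos UA α
  set β : Fin n → ℝ := hB.eigenvalues with hβdef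
  set UB : Matrix (Fin n) (Fin n) ℂ := (Matrix.IsHermitian.eigenvectorUnitary hB :
      Matrix (Fin n) (Fin n) ℂ) with hUBdef
  have hUBmem := (Matrix.IsHermitian.eigenvectorUnitary hB).2
  have hUB' : star UB * UB = 1 := Matrix.mem_unitaryGroup_iff'.mp hUBmem
  have hB_spec : Φ A = UB * Matrix.diagonal ((↑) ∘ β) * star UB := hB.spectral_theorem
  -- M = f(Φ A)
  have hM_eq : hermCFC (Φ A) f = UB * Matrix.diagonal ((↑) ∘ (f ∘ β)) * star UB := by
    rw [hermCFC, dif_pos hB]; rfl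
  have hM : (hermCFC (Φ A) f).IsHermitian := by rw [hM_eq]; exact herm_conj_diag UB (f ∘ β)
  set eM : Fin n → ℝ := hM.eigenvalues with heMdef
  set WM : Matrix (Fin n) (Fin n) ℂ := (Matrix.IsHermitian.eigenvectorUnitary hM :
      Matrix (Fin n) (Fin n) ℂ) with hWMdef
  have hWMmem := (Matrix.IsHermitian.eigenvectorUnitary hM).2
  have hWM' : star WM * WM = 1 := Matrix.mem_unitaryGroup_iff'.mp hWMmem
  have hM_spec : hermCFC (Φ A) f = WM * Matrix.diagonal ((↑) ∘ eM) * star WM :=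
    hM.spectral_theorem
  -- H = Φ(f(A))
  have hH : (Φ (hermCFC A f)).IsHermitian := by
    rw [hfA_eq]; exact phi_herm Φ hpos UA (f ∘ α)
  set eH : Fin n → ℝ := hH.eigenvalues with heHdef
  set WH : Matrix (Fin n) (Fin n) ℂ := (Matrix.IsHermitian.eigenvectorUnitary hH :
      Matrix (Fin n) (Fin n) ℂ) with hWHdef
  have hWHmem := (Matrix.IsHermitian.eigenvectorUnitary hH).2
  have hH_spec : Φ (hermCFC A f) = WH * Matrix.diagonal ((↑) ∘ eH) * star WH :=
    hH.spectral_theorem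
  -- unfold eigDesc
  have hLdesc : eigDesc (hermCFC (Φ A) f) = fun j => eM (Tuple.sort eM j.rev) := by
    rw [eigDesc, dif_pos hM]
  have hRdesc : eigDesc (Φ (hermCFC A f)) = fun j => eH (Tuple.sort eH j.rev) := by
    rw [eigDesc, dif_pos hH]
  -- injectivity of sorted index maps
  have hinj : ∀ (σ : Equiv.Perm (Fin n)), Function.Injective (fun j : Fin n => σ j.rev) := by
    intro σ a b h
    exact Fin.rev_injective (σ.injective h)
  -- the index sets
  set S₁ : Finset (Fin n) := (Finset.Iic k).image (fun j => Tuple.sort eM j.rev) with hS₁def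
  set S₂ : Finset (Fin n) := (Finset.Iic k).image (fun j => Tuple.sort (f ∘ β) j.rev) with hS₂def
  have hS₁card : S₁.card = (k : ℕ) + 1 := by
    rw [hS₁def, Finset.card_image_of_injective _ (hinj _), Fin.card_Iic]
  have hS₂card : S₂.card = (k : ℕ) + 1 := by
    rw [hS₂def, Finset.card_image_of_injective _ (hinj _), Fin.card_Iic]
  -- Step 1 : sum of top k+1 eigenvalues of f(Φ A) ≤ top sum of (f ∘ β)
  have step1 : ∑ j ∈ Finset.Iic k, eM (Tuple.sort eM j.rev)
      ≤ ∑ j ∈ Finset.Iic k, (f ∘ β) (Tuple.sort (f ∘ β) j.rev) := by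
    have he1 : ∑ j ∈ Finset.Iic k, eM (Tuple.sort eM j.rev) = ∑ i ∈ S₁, eM i := by
      rw [hS₁def, Finset.sum_image (fun a _ b _ h => hinj _ h)]
    have he2 : ∀ i, eM i = (star (fun p => WM p i) ⬝ᵥ (hermCFC (Φ A) f) *ᵥ (fun p => WM p i)).re := by
      intro i
      rw [hM_spec]
      exact (qf_col_self WM eM hWM' i).symm
    have hkf := kf_cols (f ∘ β) UB WM hUBmem hWMmem S₁ k hS₁card
    rw [← hM_eq] at hkf
    calc ∑ j ∈ Finset.Iic k, eM (Tuple.sort eM j.rev) = ∑ i ∈ S₁, eM i := he1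
      _ = ∑ i ∈ S₁, (star (fun p => WM p i) ⬝ᵥ (hermCFC (Φ A) f) *ᵥ (fun p => WM p i)).re :=
          Finset.sum_congr rfl (fun i _ => he2 i)
      _ ≤ ∑ j ∈ Finset.Iic k, (f ∘ β) (Tuple.sort (f ∘ β) j.rev) := hkf
  -- Step 2 : Jensen, pointwise
  have jensen : ∀ i : Fin n, f (β i)
      ≤ (star (fun p => UB p i) ⬝ᵥ (Φ (hermCFC A f)) *ᵥ (fun p => UB p i)).re := by
    intro i
    set v : Fin n → ℂ := fun p => UB p i with hvdef
    set μ : Fin m → ℝ := fun q => (star v ⬝ᵥ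
      (Φ (UA * Matrix.diagonal (fun p => if p = q then (1:ℂ) else 0) * star UA)) *ᵥ v).re with hμdef
    have hμ0 : ∀ q, 0 ≤ μ q := by
      intro q
      have h := (hpos _ (pmat_psd UA q)).dotProduct_mulVec_nonneg v
      have := (Complex.le_def.mp h).1
      simpa using this
    have hμ1 : ∑ q, μ q = 1 := by
      have h3 : (star v ⬝ᵥ (∑ q, Φ (UA * Matrix.diagonal
          (fun p => if p = q then (1:ℂ) else 0) * star UA)) *ᵥ v).re = ∑ q, μ q := by
        rw [sum_mulVec', dot_sum', Complex.re_sum]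
      rw [← h3, ← map_sum, pmat_sum UA hUA1, hunital, one_mulVec]
      exact dot_self_re UB hUB' i
    have h1 : (star v ⬝ᵥ (Φ A) *ᵥ v).re = ∑ q, α q * μ q := by
      conv_lhs => rw [hA_spec]
      rw [phi_decomp Φ UA α, qf_sum]
    have h2 : (star v ⬝ᵥ (Φ A) *ᵥ v).re = β i := by
      rw [hB_spec]
      exact qf_col_self UB β hUB' i
    have hH1 : (star v ⬝ᵥ (Φ (hermCFC A f)) *ᵥ v).re = ∑ q, (f ∘ α) q * μ q := by
      conv_lhs => rw [hfA_eq]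
      rw [phi_decomp Φ UA (f ∘ α), qf_sum]
    have hwavg : ∑ q, μ q • α q = β i := by
      rw [← h2, h1]
      congr 1; funext q
      simp [smul_eq_mul, mul_comm]
    calc f (β i) = f (∑ q, μ q • α q) := by rw [hwavg]
      _ ≤ ∑ q, μ q • f (α q) :=
          hconv.map_sum_le (fun q _ => hμ0 q) hμ1 (fun q _ => hspec q)
      _ = ∑ q, (f ∘ α) q * μ q := by
          congr 1; funext q
          simp [smul_eq_mul, mul_comm]
      _ = (star v ⬝ᵥ (Φ (hermCFC A f)) *ᵥ v).re := hH1.symm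
  -- Step 2' : top sum of (f ∘ β) ≤ sum over S₂ of quadratic forms of H
  have step2 : ∑ j ∈ Finset.Iic k, (f ∘ β) (Tuple.sort (f ∘ β) j.rev)
      ≤ ∑ i ∈ S₂, (star (fun p => UB p i) ⬝ᵥ (Φ (hermCFC A f)) *ᵥ (fun p => UB p i)).re := by
    have he1 : ∑ j ∈ Finset.Iic k, (f ∘ β) (Tuple.sort (f ∘ β) j.rev)
        = ∑ i ∈ S₂, (f ∘ β) i := by
      rw [hS₂def, Finset.sum_image (fun a _ b _ h => hinj _ h)]
    rw [he1]
    exact Finset.sum_le_sum (fun i _ => jensen i)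
  -- Step 3 : Ky Fan bound for H
  have step3 : ∑ i ∈ S₂, (star (fun p => UB p i) ⬝ᵥ (Φ (hermCFC A f)) *ᵥ (fun p => UB p i)).re
      ≤ ∑ j ∈ Finset.Iic k, eH (Tuple.sort eH j.rev) := by
    have hkf := kf_cols eH WH UB hWHmem hUBmem S₂ k hS₂card
    rw [← hH_spec] at hkf
    exact hkf
  simp only [hLdesc, hRdesc]
  exact le_trans step1 (le_trans step2 step3)
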